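/- Every connected 2r-regular multigraph G such that (r+1)|V(G)| is even can be decomposed into two spanning subgraphs H1 and H2 (with E(H1) ∪ E(H2) = E(G), E(H1) ∩ E(H2) = ∅) such that every vertex degree in H1 and in H2 lies in the set {r−1, r+1}. -/

import Mathlib

namespace MG

variable {V E : Type} [Fintype V] [Fintype E] [DecidableEq V] [DecidableEq E]

/-- Degree of `v` in the spanning subgraph with edge set `S`; loops count twice. -/
def deg (ends : E → V × V) (S : Finset E) (v : V) : ℕ :=
  (S.filter fun e => (ends e).1 = v).card + (S.filter fun e => (ends e).2 = v).card

/-- Edges of `S` with exactly one end in `A`. -/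
def cut (ends : E → V × V) (S : Finset E) (A : Finset V) : Finset E :=
  S.filter fun e => ¬ (((ends e).1 ∈ A) ↔ ((ends e).2 ∈ A))

/-- Edges of `S` with both ends in `A`. -/
def inside (ends : E → V × V) (S : Finset E) (A : Finset V) : Finset E :=
  S.filter fun e => (ends e).1 ∈ A ∧ (ends e).2 ∈ A

/-- `m`-edge-connected: every edge cut has at least `m` edges. -/
def EdgeConn (ends : E → V × V) (m : ℕ) : Prop :=
  ∀ A : Finset V, A.Nonempty → A ≠ Finset.univ → m ≤ (cut ends Finset.univ A).card

/-- Essentially `lam`-edge-connected: every edge cut of size `< lam` has all its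
edges incident with one common vertex. -/
def EssEdgeConn (ends : E → V × V) (lam : ℕ) : Prop :=
  ∀ A : Finset V, A.Nonempty → A ≠ Finset.univ →
    (cut ends Finset.univ A).card < lam →
      ∃ v : V, ∀ e ∈ cut ends Finset.univ A, (ends e).1 = v ∨ (ends e).2 = v

/-- The edge set `S` induces a bipartite graph. -/
def BipOn (ends : E → V × V) (S : Finset E) : Prop :=
  ∃ X : Finset V, ∀ e ∈ S, ¬ (((ends e).1 ∈ X) ↔ ((ends e).2 ∈ X))

/-- Edges of `S` not crossing the bipartition `(X, Xᶜ)`. -/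
def bad (ends : E → V × V) (S : Finset E) (X : Finset V) : Finset E :=
  S.filter fun e => (((ends e).1 ∈ X) ↔ ((ends e).2 ∈ X))

/-- The bipartite index: fewest edge deletions making the graph `(V, S)` bipartite. -/
def biIndexOn (ends : E → V × V) (S : Finset E) : ℕ :=
  Finset.univ.inf' Finset.univ_nonempty fun X : Finset V => (bad ends S X).card

/-- Adjacency via an edge of `S`. -/
def adjOn (ends : E → V × V) (S : Finset E) (a b : V) : Prop :=
  ∃ e ∈ S, ends e = (a, b) ∨ ends e = (b, a)

/-- The spanning subgraph with edge set `S` is connected. -/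
def ConnOn (ends : E → V × V) (S : Finset E) : Prop :=
  ∀ a b : V, Relation.ReflTransGen (adjOn ends S) a b

/-- `T` is the edge set of a spanning tree. -/
def IsSpTree (ends : E → V × V) (T : Finset E) : Prop :=
  ConnOn ends T ∧ T.card + 1 = Fintype.card V

/-- `m`-tree-connected inside `S`: `m` pairwise edge-disjoint spanning trees using edges of `S`. -/
def TreeConnOn (ends : E → V × V) (m : ℕ) (S : Finset E) : Prop :=
  ∃ T : Fin m → Finset E, (∀ i, T i ⊆ S ∧ IsSpTree ends (T i)) ∧
    ∀ i j, i ≠ j → Disjoint (T i) (T j)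

/-- `C` is the edge set of an odd cycle: odd, nonempty, 2-regular on its support and
connected on its support. -/
def IsOddCycle (ends : E → V × V) (C : Finset E) : Prop :=
  C.Nonempty ∧ Odd C.card ∧ (∀ v : V, deg ends C v = 0 ∨ deg ends C v = 2) ∧
    ∀ a b : V, 0 < deg ends C a → 0 < deg ends C b →
      Relation.ReflTransGen (adjOn ends C) a b

/-- `f` is compatible with the graph with respect to the bipartition `(X, Xᶜ)`. -/
def CompatAt (ends : E → V × V) {k : ℕ} (f : V → ZMod k) (X : Finset V) : Prop :=
  (∃ x : ℕ, x ≤ (inside ends Finset.univ X).card ∧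
    (∑ v ∈ X, f v) - ((2 * x : ℕ) : ZMod k) = ∑ v ∈ Xᶜ, f v) ∨
  (∃ y : ℕ, y ≤ (inside ends Finset.univ Xᶜ).card ∧
    (∑ v ∈ X, f v) = (∑ v ∈ Xᶜ, f v) - ((2 * y : ℕ) : ZMod k))

end MG

open MG Finset

set_option linter.unusedSectionVars false
set_option linter.unnecessarySeqFocus false
set_option maxHeartbeats 1600000

namespace MGA
variable {V E : Type} [Fintype V] [Fintype E] [DecidableEq V] [DecidableEq E]

def dfst (ends : E → V × V) (d : E × Bool) : V :=
  if d.2 then (ends d.1).1 else (ends d.1).2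
def dsnd (ends : E → V × V) (d : E × Bool) : V :=
  if d.2 then (ends d.1).2 else (ends d.1).1
def step (ends : E → V × V) (a b : E × Bool) : Prop := dsnd ends a = dfst ends b
def edges (L : List (E × Bool)) : List E := L.map Prod.fst
def IsClosed (ends : E → V × V) (L : List (E × Bool)) : Prop :=
  ∀ h : L ≠ [], dsnd ends (L.getLast h) = dfst ends (L.head h)

def col (ns : ℕ → Bool) : ℕ → Bool
  | 0 => false
  | k+1 => if ns (k+1) then col ns k else !(col ns k)

lemma col_iff (ns : ℕ → Bool) (h0 : ns 0 = true) :
    ∀ k, (col ns k = true ↔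
      Odd (((Finset.range (k+1)).filter (fun j => ns j = false)).card)) := by
  intro k
  induction k with
  | zero =>
    have h1 : (Finset.range 1).filter (fun j => ns j = false) = ∅ := by
      ext j
      simp only [Finset.mem_filter, Finset.mem_range, Nat.lt_one_iff, Finset.notMem_empty,
        iff_false, not_and]
      rintro rfl
      simp [h0]
    rw [h1]
    simp [col]
  | succ k ih =>
    have hsplit : (Finset.range (k+2)).filter (fun j => ns j = false)
        = if ns (k+1) = false then
            insert (k+1) ((Finset.range (k+1)).filter (fun j => ns j = false))
          else (Finset.range (k+1)).filter (fun j => ns j = false) := by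
      rw [Finset.range_add_one, Finset.filter_insert]
    by_cases h : ns (k+1) = true
    · rw [hsplit, if_neg (by simp [h])]
      rw [show col ns (k+1) = col ns k from by simp [col, h]]
      exact ih
    · have hb : ns (k+1) = false := by simpa using h
      rw [hsplit, if_pos hb, Finset.card_insert_of_notMem (by simp)]
      rw [show col ns (k+1) = !(col ns k) from by simp [col, hb]]
      rw [Nat.odd_add_one, ← ih]
      cases col ns k <;> simp

variable (ends : E → V × V)

lemma dart_ind (d : E × Bool) (v : V) :
    ((if dfst ends d = v then 1 else 0) + if dsnd ends d = v then 1 else 0 : ℕ)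
    = (if (ends d.1).1 = v then 1 else 0) + if (ends d.1).2 = v then 1 else 0 := by
  rcases d with ⟨e, b⟩
  cases b <;> simp [dfst, dsnd] <;> split_ifs <;> simp

/-- parity of used slots at `w` along a chain -/
lemma countP_parity (w : V) : ∀ (L : List (E × Bool)) (h : L ≠ []),
    List.IsChain (step ends) L →
    (L.countP (fun d => decide (dfst ends d = w)) +
     L.countP (fun d => decide (dsnd ends d = w))) % 2
    = ((if dfst ends (L.head h) = w then 1 else 0) +
       (if dsnd ends (L.getLast h) = w then 1 else 0)) % 2 := by
  intro L
  induction L with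
  | nil => intro h; exact absurd rfl h
  | cons d M ih =>
    intro _ hch
    cases M with
    | nil =>
      simp only [List.countP_cons, List.countP_nil, decide_eq_true_eq, List.head_cons,
        List.getLast_singleton]
      split <;> split <;> simp_all
    | cons d' M' =>
      have hch' : List.IsChain (step ends) (d' :: M') := hch.tail
      have hstep : step ends d d' := (List.isChain_cons_cons.mp hch).1
      have hne' : (d' :: M') ≠ [] := by simp
      have H := ih hne' hch'
      have hhead : (d' :: M').head hne' = d' := rfl
      rw [hhead] at H
      have hlast : (d :: d' :: M').getLast (by simp) = (d' :: M').getLast hne' := by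
        simp [List.getLast_cons]
      have hdd' : dfst ends d' = dsnd ends d := hstep.symm
      rw [hdd'] at H
      simp only [List.countP_cons, decide_eq_true_eq, hlast, List.head_cons] at H ⊢
      split_ifs at H ⊢ <;> simp_all <;> omega


lemma countP_darts (w : V) (L : List (E × Bool)) :
    L.countP (fun d => decide (dfst ends d = w)) +
     L.countP (fun d => decide (dsnd ends d = w))
    = L.countP (fun d => decide ((ends d.1).1 = w)) +
      L.countP (fun d => decide ((ends d.1).2 = w)) := by
  induction L with
  | nil => simp
  | cons d M ih =>
    simp only [List.countP_cons, decide_eq_true_eq]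
    have h : ((if dfst ends d = w then 1 else 0) + (if dsnd ends d = w then 1 else 0) : ℕ)
        = (if (ends d.1).1 = w then 1 else 0) + (if (ends d.1).2 = w then 1 else 0) := by
      rcases d with ⟨e, b⟩
      cases b <;> simp [dfst, dsnd] <;> split_ifs <;> simp
    omega

lemma deg_compl (S : Finset E) (v : V) :
    deg ends S v + deg ends Sᶜ v = deg ends Finset.univ v := by
  unfold MG.deg
  have h1 : ∀ p : E → Prop, ∀ _ : DecidablePred p,
      (S.filter p).card + (Sᶜ.filter p).card = (univ.filter p).card := by
    intro p hp
    rw [← Finset.card_union_of_disjoint]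
    · congr 1; ext e; simp; tauto
    · exact Finset.disjoint_filter_filter disjoint_compl_right
  rw [← h1 (fun e => (ends e).1 = v) _, ← h1 (fun e => (ends e).2 = v) _]
  ring

lemma deg_toFinset (L : List (E × Bool)) (hnd : (edges L).Nodup) (w : V) :
    deg ends (edges L).toFinset w
    = L.countP (fun d => decide (dfst ends d = w)) +
      L.countP (fun d => decide (dsnd ends d = w)) := by
  rw [countP_darts]
  unfold MG.deg
  have h1 : ∀ p : E → Prop, ∀ _ : DecidablePred p,
      ((edges L).toFinset.filter p).card = L.countP (fun d => decide (p d.1)) := by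
    intro p hp
    have heq : (edges L).toFinset.filter p = ((edges L).filter (fun e => decide (p e))).toFinset := by
      ext e; simp [List.mem_filter]
    rw [heq, List.toFinset_card_of_nodup (hnd.filter _), ← List.countP_eq_length_filter]
    unfold edges
    rw [List.countP_map]
    rfl
  rw [h1 (fun e => (ends e).1 = w) _, h1 (fun e => (ends e).2 = w) _]

lemma exists_maxlen {α : Type} (P : List α → Prop) (N : ℕ)
    (hbd : ∀ L, P L → L.length ≤ N) {L0 : List α} (h0 : P L0) :
    ∃ M, P M ∧ ∀ M', P M' → M'.length ≤ M.length := by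
  suffices h : ∀ fuel L, P L → N - L.length ≤ fuel →
      ∃ M, P M ∧ ∀ M', P M' → M'.length ≤ M.length by
    exact h N L0 h0 (by omega)
  intro fuel
  induction fuel with
  | zero =>
    intro L hL hle
    refine ⟨L, hL, fun M' hM' => ?_⟩
    have := hbd M' hM'; have := hbd L hL; omega
  | succ k ih =>
    intro L hL hle
    by_cases hex : ∃ M', P M' ∧ L.length < M'.length
    · obtain ⟨M', h1, h2⟩ := hex
      exact ih M' h1 (by omega)
    · push_neg at hex
      exact ⟨L, hL, fun M' h => hex M' h⟩

lemma exists_closed_trail (S : Finset E) (hev : ∀ w, Even (deg ends S w))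
    (v : V) (e₀ : E) (he₀ : e₀ ∈ S) (hv : (ends e₀).1 = v ∨ (ends e₀).2 = v) :
    ∃ (L : List (E × Bool)) (h : L ≠ []),
      List.IsChain (step ends) L ∧ (edges L).Nodup ∧ (∀ d ∈ L, d.1 ∈ S) ∧
      dfst ends (L.head h) = v ∧ dsnd ends (L.getLast h) = v := by
  classical
  set P : List (E × Bool) → Prop := fun L =>
    (∃ h : L ≠ [], dfst ends (L.head h) = v) ∧ List.IsChain (step ends) L ∧
    (edges L).Nodup ∧ ∀ d ∈ L, d.1 ∈ S with hP
  have hbd : ∀ L, P L → L.length ≤ S.card := by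
    intro L hL
    have h1 : (edges L).toFinset ⊆ S := by
      intro e he
      simp only [List.mem_toFinset, edges, List.mem_map] at he
      obtain ⟨d, hd, rfl⟩ := he
      exact hL.2.2.2 d hd
    have h2 := Finset.card_le_card h1
    rw [List.toFinset_card_of_nodup hL.2.2.1] at h2
    simpa [edges] using h2
  have hdart : ∀ (e : E) (u : V), (ends e).1 = u ∨ (ends e).2 = u →
      ∃ b, dfst ends (e, b) = u := by
    rintro e u (h | h)
    · exact ⟨true, h⟩
    · exact ⟨false, h⟩
  obtain ⟨b₀, hb₀⟩ := hdart e₀ v hv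
  have h0 : P [(e₀, b₀)] := by
    refine ⟨⟨by simp, hb₀⟩, by simp, by simp [edges], by simp [he₀]⟩
  obtain ⟨M, hM, hmax⟩ := exists_maxlen P S.card hbd h0
  obtain ⟨hne, hhead⟩ := hM.1
  have hch := hM.2.1
  have hnd := hM.2.2.1
  have hsubS := hM.2.2.2
  set w := dsnd ends (M.getLast hne) with hw
  -- every S-edge at w is in M
  have hcov : ∀ e ∈ S, ((ends e).1 = w ∨ (ends e).2 = w) → e ∈ edges M := by
    intro e heS hew
    by_contra hnotin
    obtain ⟨b, hb⟩ := hdart e w hew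
    have hP' : P (M ++ [(e, b)]) := by
      refine ⟨⟨by simp, ?_⟩, ?_, ?_, ?_⟩
      · rw [List.head_append_of_ne_nil hne]; exact hhead
      · rw [List.isChain_append]
        refine ⟨hch, List.isChain_singleton _, ?_⟩
        intro x hx y hy
        rw [List.getLast?_eq_getLast hne] at hx
        simp at hx hy
        subst hx; subst hy
        exact hb.symm
      · unfold edges
        rw [List.map_append]
        simp only [List.map_cons, List.map_nil]
        rw [List.nodup_append']
        exact ⟨hnd, List.nodup_singleton _, by simpa [edges] using hnotin⟩
      · intro d hd
        rcases List.mem_append.mp hd with h | h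
        · exact hsubS d h
        · simp at h; subst h; exact heS
    have := hmax _ hP'
    simp at this
  -- deg S w = deg (edges M).toFinset w
  have hdegeq : deg ends S w = deg ends (edges M).toFinset w := by
    unfold MG.deg
    congr 1
    · congr 1
      ext e
      simp only [Finset.mem_filter, List.mem_toFinset]
      constructor
      · rintro ⟨h1, h2⟩; exact ⟨hcov e h1 (Or.inl h2), h2⟩
      · rintro ⟨h1, h2⟩
        refine ⟨?_, h2⟩
        simp only [edges, List.mem_map] at h1
        obtain ⟨d, hd, rfl⟩ := h1
        exact hsubS d hd
    · congr 1
      ext e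
      simp only [Finset.mem_filter, List.mem_toFinset]
      constructor
      · rintro ⟨h1, h2⟩; exact ⟨hcov e h1 (Or.inr h2), h2⟩
      · rintro ⟨h1, h2⟩
        refine ⟨?_, h2⟩
        simp only [edges, List.mem_map] at h1
        obtain ⟨d, hd, rfl⟩ := h1
        exact hsubS d hd
  have hpar := countP_parity ends w M hne hch
  have hdeg2 := deg_toFinset ends M hnd w
  have heven := hev w
  rw [hdegeq, hdeg2] at heven
  obtain ⟨k, hk⟩ := heven
  have hlast1 : (if dsnd ends (M.getLast hne) = w then (1:ℕ) else 0) = 1 := by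
    simp [hw]
  rw [hlast1] at hpar
  have hhw : dfst ends (M.head hne) = w := by
    by_contra hc
    rw [if_neg hc] at hpar
    omega
  have : w = v := by rw [← hhw, hhead]
  exact ⟨M, hne, hch, hnd, hsubS, hhead, by rw [← hw, this]⟩


lemma cyc_key {L : List (E × Bool)} (hne : L ≠ []) (hch : List.IsChain (step ends) L)
    (hcl : IsClosed ends L) (i : ℕ) (h : i < L.length) :
    dsnd ends L[i] = dfst ends (L[(i + 1) % L.length]'(Nat.mod_lt _ (List.length_pos_iff.mpr hne))) := by
  rcases Nat.lt_or_ge (i + 1) L.length with h2 | h2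
  · have h3 : (i + 1) % L.length = i + 1 := Nat.mod_eq_of_lt h2
    have h4 := List.isChain_iff_getElem.mp hch i (by omega)
    simp only [h3]
    exact h4
  · have hieq : i + 1 = L.length := by omega
    have h3 : (i + 1) % L.length = 0 := by simp [hieq]
    have hlast : L.getLast hne = L[i] := by
      rw [List.getLast_eq_getElem]
      congr 1
      omega
    have hhead : L.head hne = L[(i + 1) % L.length]'(Nat.mod_lt _ (List.length_pos_iff.mpr hne)) := by
      rw [List.head_eq_getElem]
      congr 1
      omega
    rw [← hlast, ← hhead]
    exact hcl hne

lemma rotate_closed {L : List (E × Bool)} (hne : L ≠ []) (hch : List.IsChain (step ends) L)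
    (hcl : IsClosed ends L) (k : ℕ) :
    List.IsChain (step ends) (L.rotate k) ∧ IsClosed ends (L.rotate k) := by
  have hm : 0 < L.length := List.length_pos_iff.mpr hne
  have hlenrot : (L.rotate k).length = L.length := List.length_rotate L k
  constructor
  · rw [List.isChain_iff_getElem]
    intro i hi
    simp only [List.get_eq_getElem, List.getElem_rotate]
    have h1 : (i + k) % L.length < L.length := Nat.mod_lt _ hm
    have h2 := cyc_key ends hne hch hcl ((i + k) % L.length) h1
    show dsnd ends _ = dfst ends _
    rw [h2]
    congr 1
    congr 1
    rw [Nat.mod_add_mod]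
    congr 1
    omega
  · intro hne'
    have hm' : 0 < (L.rotate k).length := List.length_pos_iff.mpr hne'
    rw [List.getLast_eq_getElem, List.head_eq_getElem]
    simp only [List.getElem_rotate]
    have h1 : ((L.rotate k).length - 1 + k) % L.length < L.length := Nat.mod_lt _ hm
    have h2 := cyc_key ends hne hch hcl _ h1
    rw [h2]
    congr 1
    congr 1
    rw [Nat.mod_add_mod]
    have h3 : (L.rotate k).length - 1 + k + 1 = L.length + k := by omega
    rw [h3, Nat.add_mod_left, Nat.zero_add]

lemma endpoint_dart (d : E × Bool) (u : V) (h : (ends d.1).1 = u ∨ (ends d.1).2 = u) :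
    dfst ends d = u ∨ dsnd ends d = u := by
  rcases d with ⟨e, b⟩
  cases b <;> simp [dfst, dsnd] <;> tauto

theorem exists_euler (hconn : ConnOn ends Finset.univ)
    (hev : ∀ w, Even (deg ends Finset.univ w)) (hpos : ∀ w : V, 0 < deg ends Finset.univ w)
    (hV : Nonempty V) :
    ∃ (L : List (E × Bool)) (_ : L ≠ []),
      List.IsChain (step ends) L ∧ IsClosed ends L ∧ (edges L).Nodup ∧
      ∀ e : E, e ∈ edges L := by
  classical
  obtain ⟨v0⟩ := hV
  -- some edge at v0
  have hex0 : ∃ e : E, (ends e).1 = v0 ∨ (ends e).2 = v0 := by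
    by_contra hc
    push_neg at hc
    have hd := hpos v0
    unfold MG.deg at hd
    have h1 : (univ.filter fun e => (ends e).1 = v0) = ∅ := by
      ext e
      simp only [mem_filter, mem_univ, true_and, notMem_empty, iff_false]
      exact (hc e).1
    have h2 : (univ.filter fun e => (ends e).2 = v0) = ∅ := by
      ext e
      simp only [mem_filter, mem_univ, true_and, notMem_empty, iff_false]
      exact (hc e).2
    rw [h1, h2] at hd
    simp at hd
  obtain ⟨ea, hea⟩ := hex0
  set P : List (E × Bool) → Prop := fun L =>
    L ≠ [] ∧ List.IsChain (step ends) L ∧ IsClosed ends L ∧ (edges L).Nodup with hPdef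
  have hbd : ∀ L, P L → L.length ≤ Fintype.card E := by
    intro L hL
    have : (edges L).length ≤ Fintype.card E := by
      have h1 := hL.2.2.2.length_le_card
      simpa using h1
    simpa [edges] using this
  obtain ⟨Lb, hLbne, hLb1, hLb2, _, hLb4, hLb5⟩ :=
    exists_closed_trail ends univ (fun w => hev w) v0 ea (mem_univ _) hea
  have h0 : P Lb := ⟨hLbne, hLb1, fun h => by rw [hLb5, hLb4], hLb2⟩
  obtain ⟨W, hW, hmax⟩ := exists_maxlen P (Fintype.card E) hbd h0
  obtain ⟨hWne, hWch, hWcl, hWnd⟩ := hW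
  have hWm : 0 < W.length := List.length_pos_iff.mpr hWne
  refine ⟨W, hWne, hWch, hWcl, hWnd, ?_⟩
  by_contra hcov
  push_neg at hcov
  obtain ⟨e₀, he₀⟩ := hcov
  set T : Finset E := (edges W).toFinset with hT
  have he₀T : e₀ ∈ Tᶜ := by simp [hT, he₀]
  -- T has even degrees
  have hevT : ∀ w, Even (deg ends T w) := by
    intro w
    have hpar := countP_parity ends w W hWne hWch
    have hdeg := deg_toFinset ends W hWnd w
    have heq : dsnd ends (W.getLast hWne) = dfst ends (W.head hWne) := hWcl hWne
    rw [heq] at hpar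
    rw [← hT] at hdeg
    rw [hdeg]
    rcases Nat.even_or_odd (deg ends T w) with h | h
    · exact (hdeg ▸ h)
    · exfalso
      rw [hdeg] at h
      obtain ⟨k, hk⟩ := h
      split_ifs at hpar <;> omega
  have hevTc : ∀ w, Even (deg ends Tᶜ w) := by
    intro w
    have h1 := deg_compl ends T w
    obtain ⟨a, ha⟩ := hevT w
    obtain ⟨b, hb⟩ := hev w
    exact ⟨b - a, by omega⟩
  set x := (ends e₀).1 with hx
  set A : Finset V := univ.filter (fun z => Relation.ReflTransGen (adjOn ends Tᶜ) x z) with hA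
  have hxA : x ∈ A := by
    simp only [hA, mem_filter, mem_univ, true_and]
    exact Relation.ReflTransGen.refl
  have hclosedA : ∀ a ∈ A, ∀ b, adjOn ends Tᶜ a b → b ∈ A := by
    intro a ha b hab
    simp only [hA, mem_filter, mem_univ, true_and] at ha ⊢
    exact ha.tail hab
  have hcross : ∀ a b : V, Relation.ReflTransGen (adjOn ends univ) a b →
      a ∈ A → b ∉ A → ∃ p q, p ∈ A ∧ q ∉ A ∧ adjOn ends univ p q := by
    intro a b hab
    induction hab with
    | refl => intro ha hb; exact absurd ha hb
    | @tail c d h1 h2 ih =>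
      intro ha hb
      by_cases hc : c ∈ A
      · exact ⟨c, d, hc, hb, h2⟩
      · exact ih ha hc
  have hWpos : ∀ e ∈ edges W, ∀ u : V, ((ends e).1 = u ∨ (ends e).2 = u) →
      ∃ j, ∃ hj : j < W.length, dfst ends (W[j]'hj) = u := by
    intro e he u hu
    simp only [edges, List.mem_map] at he
    obtain ⟨d, hd, rfl⟩ := he
    obtain ⟨i, hilt, hi⟩ := List.getElem_of_mem hd
    rcases endpoint_dart ends d u hu with h | h
    · exact ⟨i, hilt, by rw [hi]; exact h⟩
    · refine ⟨(i + 1) % W.length, Nat.mod_lt _ hWm, ?_⟩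
      have hck := cyc_key ends hWne hWch hWcl i hilt
      rw [← hck, hi]
      exact h
  -- find a W-vertex in A
  have hfind : ∃ j, ∃ hj : j < W.length, dfst ends (W[j]'hj) ∈ A := by
    by_contra hno
    push_neg at hno
    have hu0 : dfst ends (W.head hWne) ∉ A := by
      rw [List.head_eq_getElem]
      exact hno 0 hWm
    obtain ⟨p, q, hp, hq, hadj⟩ := hcross x _ (hconn x _) hxA hu0
    obtain ⟨e', he'u, hends⟩ := hadj
    by_cases heT : e' ∈ Tᶜ
    · exact hq (hclosedA p hp q ⟨e', heT, hends⟩)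
    · have he'W : e' ∈ edges W := by
        simp [hT] at heT
        simpa using heT
      have hpe : (ends e').1 = p ∨ (ends e').2 = p := by
        rcases hends with h | h <;> rw [h] <;> simp <;> tauto
      obtain ⟨j, hj, hjp⟩ := hWpos e' he'W p hpe
      exact hno j hj (hjp ▸ hp)
  obtain ⟨j, hj, hwA⟩ := hfind
  set w := dfst ends (W[j]'hj) with hwdef
  -- an edge of Tᶜ at w
  have hedge : ∃ e ∈ Tᶜ, (ends e).1 = w ∨ (ends e).2 = w := by
    simp only [hA, mem_filter, mem_univ, true_and] at hwA
    rcases hwA.cases_tail with h | ⟨c, _, hcw⟩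
    · exact ⟨e₀, he₀T, Or.inl (by rw [h])⟩
    · obtain ⟨e, heT, hends⟩ := hcw
      rcases hends with h | h
      · exact ⟨e, heT, Or.inr (by rw [h])⟩
      · exact ⟨e, heT, Or.inl (by rw [h])⟩
  obtain ⟨eb, hebT, hebw⟩ := hedge
  obtain ⟨C, hCne, hCch, hCnd, hCsub, hChead, hClast⟩ :=
    exists_closed_trail ends Tᶜ hevTc w eb hebT hebw
  -- rotate W to start at w
  obtain ⟨hW'ch, hW'cl⟩ := rotate_closed ends hWne hWch hWcl j
  set W' := W.rotate j with hW'
  have hW'ne : W' ≠ [] := by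
    simp [hW']
    intro h; exact hWne h
  have hW'len : W'.length = W.length := List.length_rotate W j
  have hW'head : dfst ends (W'.head hW'ne) = w := by
    rw [List.head_eq_getElem]
    simp only [hW', List.getElem_rotate]
    rw [hwdef]
    congr 1
    congr 1
    rw [Nat.zero_add, Nat.mod_eq_of_lt hj]
  have hW'perm : List.Perm (edges W') (edges W) := by
    exact (List.rotate_perm W j).map Prod.fst
  -- splice
  set W2 := W' ++ C with hW2
  have hW2P : P W2 := by
    refine ⟨by simp [hW2, hW'ne], ?_, ?_, ?_⟩
    · rw [List.isChain_append]
      refine ⟨hW'ch, hCch, ?_⟩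
      intro a ha b hb
      rw [List.getLast?_eq_getLast hW'ne] at ha
      rw [List.head?_eq_head hCne] at hb
      simp at ha hb
      subst ha; subst hb
      show dsnd ends _ = dfst ends _
      rw [hW'cl hW'ne, hW'head, hChead]
    · intro hne2
      rw [List.getLast_append_of_ne_nil (h₂ := hCne), List.head_append_of_ne_nil hW'ne]
      rw [hClast, hW'head]
    · unfold edges
      rw [hW2, List.map_append, List.nodup_append']
      refine ⟨hW'perm.nodup_iff.mpr hWnd, hCnd, ?_⟩
      intro e heW' heC
      have h1 : e ∈ edges W := hW'perm.mem_iff.mp heW'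
      have h2 : e ∈ Tᶜ := by
        simp only [edges, List.mem_map] at heC
        obtain ⟨d, hd, rfl⟩ := heC
        exact hCsub d hd
      simp [hT] at h2
      exact h2 (by simpa using h1)
  have hlen := hmax W2 hW2P
  have hClen : 0 < C.length := List.length_pos_iff.mpr hCne
  rw [hW2, List.length_append, hW'len] at hlen
  omega


theorem colored_decomp (r : ℕ) (hr : 0 < r)
    (hreg : ∀ v : V, deg ends Finset.univ v = 2 * r)
    (heven : Even ((r + 1) * Fintype.card V))
    (L : List (E × Bool)) (hne : L ≠ []) (hch : List.IsChain (step ends) L)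
    (hcl : IsClosed ends L) (hnd : (edges L).Nodup) (hall : ∀ e : E, e ∈ edges L) :
    ∃ H : Finset E,
      (∀ v : V, deg ends H v = r - 1 ∨ deg ends H v = r + 1) ∧
      (∀ v : V, deg ends Hᶜ v = r - 1 ∨ deg ends Hᶜ v = r + 1) := by
  classical
  set n := Fintype.card V with hn
  set m := L.length with hmdef
  have hm : 0 < m := List.length_pos_iff.mpr hne
  have hmlt : ∀ i : ℕ, i % m < L.length := fun i => Nat.mod_lt _ hm
  set D : ℕ → E × Bool := fun i => L[i % m]'(hmlt i) with hD
  have hDp : ∀ i : ℕ, D (i % m) = D i := by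
    intro i
    simp only [hD]
    congr 1
    exact Nat.mod_mod_of_dvd i dvd_rfl
  -- m = Fintype.card E
  have hmE : m = Fintype.card E := by
    have h1 : (edges L).toFinset = (univ : Finset E) := by
      ext e; simp [hall e]
    have h2 := List.toFinset_card_of_nodup hnd
    rw [h1] at h2
    have h3 : (edges L).length = m := by simp [edges, hmdef]
    rw [h3] at h2
    rw [← h2, Finset.card_univ]
  -- handshake: m = r * n
  have hsum1 : ∀ p : E → V, ∑ v : V, (univ.filter fun e => p e = v).card = Fintype.card E := by
    intro p
    rw [← Finset.card_univ (α := E)]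
    exact (Finset.card_eq_sum_card_fiberwise (fun x _ => mem_univ (p x))).symm
  have hmrn : m = r * n := by
    have h1 : ∑ v : V, deg ends univ v = 2 * Fintype.card E := by
      unfold MG.deg
      rw [Finset.sum_add_distrib, hsum1 (fun e => (ends e).1), hsum1 (fun e => (ends e).2)]
      ring
    have h2 : ∑ v : V, deg ends univ v = 2 * (r * n) := by
      rw [Finset.sum_congr rfl (fun v _ => hreg v), Finset.sum_const, smul_eq_mul,
        Finset.card_univ, ← hn]
      ring
    rw [h2] at h1
    omega
  -- cyclic step
  have key : ∀ i : ℕ, dsnd ends (D i) = dfst ends (D (i+1)) := by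
    intro i
    have h1 := cyc_key ends hne hch hcl (i % m) (hmlt i)
    simp only [hD]
    rw [h1]
    congr 1
    congr 1
    rw [Nat.mod_add_mod]
  -- every vertex is visited
  have hDlt : ∀ i, ∀ h : i < m, D i = L[i]'h := by
    intro i h
    simp only [hD]
    congr 1
    exact Nat.mod_eq_of_lt h
  have hvis : ∀ v : V, ∃ i, i < m ∧ dfst ends (D i) = v := by
    intro v
    have hdv := hreg v
    have hpos : 0 < deg ends univ v := by omega
    unfold MG.deg at hpos
    have hex : ∃ e : E, (ends e).1 = v ∨ (ends e).2 = v := by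
      by_contra hc
      push_neg at hc
      have h1 : (univ.filter fun e => (ends e).1 = v) = ∅ := by
        ext e
        simp only [mem_filter, mem_univ, true_and, notMem_empty, iff_false]
        exact (hc e).1
      have h2 : (univ.filter fun e => (ends e).2 = v) = ∅ := by
        ext e
        simp only [mem_filter, mem_univ, true_and, notMem_empty, iff_false]
        exact (hc e).2
      rw [h1, h2] at hpos
      simp at hpos
    obtain ⟨e, he⟩ := hex
    obtain ⟨d, hd, hde⟩ := List.mem_map.mp (hall e)
    obtain ⟨i, hilt, hi⟩ := List.getElem_of_mem hd
    have hDi : D i = d := by rw [hDlt i hilt, hi]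
    have he' : (ends d.1).1 = v ∨ (ends d.1).2 = v := by rw [hde]; exact he
    rcases endpoint_dart ends d v he' with h | h
    · exact ⟨i, hilt, by rw [hDi]; exact h⟩
    · refine ⟨(i+1) % m, Nat.mod_lt _ hm, ?_⟩
      rw [hDp (i+1), ← key i, hDi]
      exact h
  set t : V → ℕ := fun v => Nat.find (hvis v) with ht
  have htlt : ∀ v, t v < m := fun v => (Nat.find_spec (hvis v)).1
  have htf : ∀ v, dfst ends (D (t v)) = v := fun v => (Nat.find_spec (hvis v)).2
  set ns : ℕ → Bool := fun i => decide (t (dfst ends (D i)) = i) with hnsdef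
  have hns : ∀ i, ns i = true ↔ t (dfst ends (D i)) = i := by
    intro i; simp [hnsdef]
  have hns0 : ns 0 = true := by
    rw [hns, ht]
    rw [Nat.find_eq_zero]
    exact ⟨hm, rfl⟩
  have hNS : (Finset.range m).filter (fun j => ns j = true) = univ.image t := by
    ext j
    simp only [Finset.mem_filter, Finset.mem_range, Finset.mem_image, Finset.mem_univ, true_and]
    constructor
    · rintro ⟨hj, hnsj⟩
      exact ⟨dfst ends (D j), (hns j).mp hnsj⟩
    · rintro ⟨v, rfl⟩
      refine ⟨htlt v, (hns _).mpr ?_⟩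
      rw [htf v]
  have htinj : Function.Injective t := by
    intro a b hab
    have h1 := htf a
    rw [hab, htf b] at h1
    exact h1.symm
  have hNScard : ((Finset.range m).filter (fun j => ns j = true)).card = n := by
    rw [hNS, Finset.card_image_of_injective _ htinj, Finset.card_univ, hn]
  have hSWcard : ((Finset.range m).filter (fun j => ns j = false)).card = m - n := by
    have h1 := Finset.card_filter_add_card_filter_not (s := Finset.range m)
      (p := fun j => ns j = true)
    have h2 : (Finset.range m).filter (fun j => ¬ (ns j = true)) =
        (Finset.range m).filter (fun j => ns j = false) := by
      apply Finset.filter_congr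
      intro j _
      simp
    rw [h2, Finset.card_range, hNScard] at h1
    omega
  have hcollast : col ns (m-1) = false := by
    have h1 : m - 1 + 1 = m := by omega
    have heven2 : Even (m - n) := by
      obtain ⟨c, hc⟩ := heven
      have hrn : (r+1) * n = r * n + n := by ring
      rw [hrn] at hc
      have hnm : n ≤ m := by
        rw [hmrn]
        exact Nat.le_mul_of_pos_left n hr
      have hmn : m + n = c + c := by rw [hmrn]; exact hc
      exact ⟨c - n, by omega⟩
    have hco := col_iff ns hns0 (m-1)
    rw [h1, hSWcard] at hco
    cases hcase : col ns (m-1)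
    · rfl
    · exfalso
      exact (Nat.not_odd_iff_even.mpr heven2) (hco.mp hcase)
  set cv : ℕ → ℕ := fun i => if col ns i then 1 else 0 with hcv
  have hK2 : ∀ i, i < m → cv i + cv ((i + (m-1)) % m)
      = if ns i = true then 2 * cv i else 1 := by
    intro i hi
    match i with
    | 0 =>
      have h1 : (0 + (m-1)) % m = m - 1 := by
        rw [Nat.zero_add, Nat.mod_eq_of_lt (show m - 1 < m by omega)]
      rw [h1, if_pos hns0]
      simp only [hcv]
      rw [hcollast]
      simp [col]
    | (k+1) =>
      have h1 : ((k+1) + (m-1)) % m = k := by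
        have h2 : (k+1) + (m-1) = k + m := by omega
        rw [h2, Nat.add_mod_right, Nat.mod_eq_of_lt (show k < m by omega)]
      rw [h1]
      by_cases h : ns (k+1) = true
      · rw [if_pos h]
        have h3 : col ns (k+1) = col ns k := by simp [col, h]
        simp only [hcv, h3]
        cases col ns k <;> simp
      · have hb : ns (k+1) = false := by simpa using h
        rw [if_neg h]
        have h3 : col ns (k+1) = !(col ns k) := by simp [col, hb]
        simp only [hcv, h3]
        cases col ns k <;> simp
  -- bijection between positions and edges
  have hDinj : ∀ i, i < m → ∀ j, j < m → (D i).1 = (D j).1 → i = j := by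
    intro i hi j hj hij
    rw [hDlt i hi, hDlt j hj] at hij
    have hi' : i < (edges L).length := by simpa [edges] using hi
    have hj' : j < (edges L).length := by simpa [edges] using hj
    have h1 : (edges L)[i] = (edges L)[j] := by
      simp only [edges, List.getElem_map]
      exact hij
    exact (hnd.getElem_inj_iff).mp h1
  have hDsurj : ∀ e : E, ∃ i, i < m ∧ (D i).1 = e := by
    intro e
    obtain ⟨d, hd, hde⟩ := List.mem_map.mp (hall e)
    obtain ⟨i, hilt, hi⟩ := List.getElem_of_mem hd
    exact ⟨i, hilt, by rw [hDlt i hilt, hi, hde]⟩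
  have hbij : ∀ f : E → ℕ, ∑ i ∈ Finset.range m, f ((D i).1) = ∑ e : E, f e := by
    intro f
    apply Finset.sum_bij (i := fun i _ => (D i).1)
    · intro a _
      exact mem_univ _
    · intro a ha b hb hab
      exact hDinj a (mem_range.mp ha) b (mem_range.mp hb) hab
    · intro e _
      obtain ⟨i, hi, he⟩ := hDsurj e
      exact ⟨i, mem_range.mpr hi, he⟩
    · intro a _
      rfl
  have degsum : ∀ S : Finset E, ∀ v : V, deg ends S v
      = ∑ e ∈ S, ((if (ends e).1 = v then 1 else 0) + (if (ends e).2 = v then 1 else 0)) := by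
    intro S v
    unfold MG.deg
    rw [Finset.sum_add_distrib, Finset.card_filter, Finset.card_filter]
  have hshift1 : ∀ i, i < m → ((i+1) % m + (m-1)) % m = i := by
    intro i hi
    rcases Nat.lt_or_ge (i+1) m with h | h
    · rw [Nat.mod_eq_of_lt h]
      have h2 : i + 1 + (m-1) = i + m := by omega
      rw [h2, Nat.add_mod_right, Nat.mod_eq_of_lt hi]
    · have h1 : i + 1 = m := by omega
      rw [h1, Nat.mod_self, Nat.zero_add, Nat.mod_eq_of_lt (show m - 1 < m by omega)]
      omega
  have hshift2 : ∀ j, j < m → ((j + (m-1)) % m + 1) % m = j := by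
    intro j hj
    rcases Nat.eq_zero_or_pos j with rfl | h
    · rw [Nat.zero_add, Nat.mod_eq_of_lt (show m - 1 < m by omega)]
      have h2 : m - 1 + 1 = m := by omega
      rw [h2, Nat.mod_self]
    · have h1 : j + (m-1) = (j-1) + m := by omega
      rw [h1, Nat.add_mod_right, Nat.mod_eq_of_lt (show j - 1 < m by omega)]
      have h2 : j - 1 + 1 = j := by omega
      rw [h2, Nat.mod_eq_of_lt hj]
  have hresh : ∀ F G : ℕ → ℕ, ∑ i ∈ Finset.range m, F i * G ((i+1) % m)
      = ∑ j ∈ Finset.range m, F ((j + (m-1)) % m) * G j := by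
    intro F G
    apply Finset.sum_bij' (i := fun i _ => (i+1) % m) (j := fun j _ => (j + (m-1)) % m)
    · intro a _
      exact mem_range.mpr (Nat.mod_lt _ hm)
    · intro a _
      exact mem_range.mpr (Nat.mod_lt _ hm)
    · intro a ha
      exact hshift1 a (mem_range.mp ha)
    · intro a ha
      exact hshift2 a (mem_range.mp ha)
    · intro a ha
      rw [hshift1 a (mem_range.mp ha)]
  set H : Finset E := univ.filter (fun e => ∃ i, i < m ∧ (D i).1 = e ∧ col ns i = true) with hH
  have hmemH : ∀ i, i < m → ((D i).1 ∈ H ↔ col ns i = true) := by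
    intro i hi
    rw [hH, mem_filter]
    simp only [mem_univ, true_and]
    constructor
    · rintro ⟨j, hj, hji, hcj⟩
      rwa [hDinj j hj i hi hji] at hcj
    · intro hc
      exact ⟨i, hi, rfl, hc⟩
  have hdegH : ∀ v : V, deg ends H v = (r - 1) + 2 * cv (t v) := by
    intro v
    set g1 : ℕ → ℕ := fun i => if dfst ends (D i) = v then 1 else 0 with hg1
    set g2 : ℕ → ℕ := fun i => if dsnd ends (D i) = v then 1 else 0 with hg2
    have hg2g1 : ∀ i, g2 i = g1 ((i+1) % m) := by
      intro i
      simp only [hg1, hg2]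
      rw [key i, ← hDp (i+1)]
    -- step 1: deg H v as weighted sum over positions
    have h1 : deg ends H v = ∑ i ∈ Finset.range m, cv i * (g1 i + g2 i) := by
      rw [degsum H v]
      have e1 : ∑ e ∈ H, ((if (ends e).1 = v then 1 else 0) + (if (ends e).2 = v then 1 else 0))
          = ∑ e : E, (if e ∈ H then
              ((if (ends e).1 = v then 1 else 0) + (if (ends e).2 = v then 1 else 0)) else 0) := by
        rw [Finset.sum_ite_mem, Finset.univ_inter]
      rw [e1, ← hbij (fun e => if e ∈ H then
          ((if (ends e).1 = v then 1 else 0) + (if (ends e).2 = v then 1 else 0)) else 0)]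
      apply Finset.sum_congr rfl
      intro i hi
      have hiq := hmemH i (mem_range.mp hi)
      have hdi := dart_ind ends (D i) v
      simp only [hg1, hg2, hcv]
      by_cases hc : col ns i = true
      · rw [if_pos (hiq.mpr hc), if_pos hc, one_mul]
        exact hdi.symm
      · rw [if_neg (fun hmem => hc (hiq.mp hmem)), if_neg hc, zero_mul]
    -- step 2: shift the second indicator
    have h2 : ∑ i ∈ Finset.range m, cv i * (g1 i + g2 i)
        = ∑ i ∈ Finset.range m, (cv i + cv ((i + (m-1)) % m)) * g1 i := by
      have e1 : ∑ i ∈ Finset.range m, cv i * (g1 i + g2 i)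
          = (∑ i ∈ Finset.range m, cv i * g1 i) + ∑ i ∈ Finset.range m, cv i * g2 i := by
        rw [← Finset.sum_add_distrib]
        apply Finset.sum_congr rfl
        intro i _
        ring
      have e2 : ∑ i ∈ Finset.range m, cv i * g2 i
          = ∑ j ∈ Finset.range m, cv ((j + (m-1)) % m) * g1 j := by
        rw [Finset.sum_congr rfl (fun i _ => by rw [hg2g1 i])]
        exact hresh cv g1
      rw [e1, e2, ← Finset.sum_add_distrib]
      apply Finset.sum_congr rfl
      intro i _
      ring
    -- step 3: restrict to the visits of v
    set Vis : Finset ℕ := (Finset.range m).filter (fun i => dfst ends (D i) = v) with hVis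
    have h3 : ∀ h : ℕ → ℕ, ∑ i ∈ Finset.range m, h i * g1 i = ∑ i ∈ Vis, h i := by
      intro h
      rw [hVis, Finset.sum_filter]
      apply Finset.sum_congr rfl
      intro i _
      simp only [hg1]
      by_cases hc : dfst ends (D i) = v
      · rw [if_pos hc, if_pos hc, mul_one]
      · rw [if_neg hc, if_neg hc, mul_zero]
    have hVcard : Vis.card = r := by
      have hc1 : ∑ i ∈ Finset.range m, g1 i = Vis.card := by
        rw [hVis, Finset.card_filter]
      have hc2 : ∑ i ∈ Finset.range m, g2 i = ∑ i ∈ Finset.range m, g1 i := by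
        rw [Finset.sum_congr rfl (fun i _ => hg2g1 i)]
        have h4 := hresh (fun _ => 1) g1
        simp only [one_mul] at h4
        rw [h4]
      have hc3 : deg ends univ v = (∑ i ∈ Finset.range m, g1 i) + ∑ i ∈ Finset.range m, g2 i := by
        rw [degsum univ v, ← hbij (fun e =>
          ((if (ends e).1 = v then 1 else 0) + (if (ends e).2 = v then 1 else 0))),
          ← Finset.sum_add_distrib]
        apply Finset.sum_congr rfl
        intro i _
        simp only [hg1, hg2]
        exact (dart_ind ends (D i) v).symm
      have hrv := hreg v
      omega
    have htv : t v ∈ Vis := by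
      rw [hVis]
      simp only [Finset.mem_filter, Finset.mem_range]
      exact ⟨htlt v, htf v⟩
    have huniq : ∀ i ∈ Vis, ns i = true → i = t v := by
      intro i hi hns'
      have h5 := (hns i).mp hns'
      rw [hVis] at hi
      simp only [Finset.mem_filter] at hi
      rw [hi.2] at h5
      exact h5.symm
    have h6 : ∑ i ∈ Vis, (cv i + cv ((i + (m-1)) % m))
        = ∑ i ∈ Vis, (if ns i = true then 2 * cv i else 1) := by
      apply Finset.sum_congr rfl
      intro i hi
      have hilt : i < m := by
        rw [hVis] at hi
        exact mem_range.mp (Finset.mem_filter.mp hi).1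
      exact hK2 i hilt
    have h7 : ∑ i ∈ Vis, (if ns i = true then 2 * cv i else 1)
        = (∑ _i ∈ Vis \ {t v}, 1) + 2 * cv (t v) := by
      rw [Finset.sum_eq_sum_sdiff_singleton_add htv]
      rw [if_pos ((hns (t v)).mpr (by rw [htf v]))]
      congr 1
      apply Finset.sum_congr rfl
      intro i hi
      simp only [Finset.mem_sdiff, Finset.mem_singleton] at hi
      rw [if_neg]
      intro hns'
      exact hi.2 (huniq i hi.1 hns')
    have h8 : ∑ _i ∈ Vis \ {t v}, (1:ℕ) = r - 1 := by
      rw [Finset.sum_const, smul_eq_mul, mul_one,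
        Finset.card_sdiff_of_subset (by simp [htv]), hVcard]
      simp
    rw [h1, h2, h3, h6, h7, h8]
  refine ⟨H, ?_, ?_⟩
  · intro v
    rw [hdegH v]
    simp only [hcv]
    by_cases hc : col ns (t v)
    · rw [if_pos hc]
      right
      omega
    · rw [if_neg hc]
      left
      omega
  · intro v
    have h9 := hdegH v
    have h10 := deg_compl ends H v
    rw [hreg v] at h10
    simp only [hcv] at h9
    by_cases hc : col ns (t v)
    · rw [if_pos hc] at h9
      left
      omega
    · rw [if_neg hc] at h9
      right
      omega


end MGA

theorem stmt2 {V E : Type} [Fintype V] [Fintype E] [DecidableEq V] [DecidableEq E]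
    (ends : E → V × V) (r : ℕ) (hr : 0 < r)
    (hconn : ConnOn ends Finset.univ)
    (hreg : ∀ v : V, deg ends Finset.univ v = 2 * r)
    (heven : Even ((r + 1) * Fintype.card V)) :
    ∃ H : Finset E,
      (∀ v : V, deg ends H v = r - 1 ∨ deg ends H v = r + 1) ∧
      (∀ v : V, deg ends Hᶜ v = r - 1 ∨ deg ends Hᶜ v = r + 1) := by
  classical
  rcases isEmpty_or_nonempty V with hV | hV
  · exact ⟨∅, fun v => (hV.false v).elim, fun v => (hV.false v).elim⟩
  · have hev : ∀ w : V, Even (deg ends Finset.univ w) := fun w => by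
      rw [hreg w]; exact even_two_mul r
    have hpos : ∀ w : V, 0 < deg ends Finset.univ w := fun w => by
      rw [hreg w]; omega
    obtain ⟨L, hne, hch, hcl, hnd, hall⟩ := MGA.exists_euler ends hconn hev hpos hV
    exact MGA.colored_decomp ends r hr hreg heven L hne hch hcl hnd hall
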